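/- arXiv:1611.02072 — 6 statements merged into one kernel-verified Lean document; each statement's English description precedes it below -/
import Mathlib

section
/- Let h₁,…,h_K : ℂ → ℂ, let Ã₁,…,Ã_K be n×n complex matrices, B̃ ∈ ℂ^{n×m}, C̃ ∈ ℂ^{p×n}, and define K̃(s) = Σ_k h_k(s) Ã_k and H̃(s) = C̃ K̃(s)⁻¹ B̃. Let μ₁,…,μ_n ∈ ℂ with K̃(μᵢ) invertible for all i, let L = [ℓ₁ … ℓ_n] ∈ ℂ^{p×n}, F = [f₁ … f_n] ∈ ℂ^{m×n}, and let M = diag(μ₁,…,μ_n). Then the left interpolation conditions ℓᵢᵀ H̃(μᵢ) = fᵢᵀ hold for all i if and only if there exists a matrix P_F ∈ ℂ^{n×n} with Fᵀ = P_Fᵀ B̃ and Σ_k h_k(M) P_Fᵀ Ã_k = Lᵀ C̃, where h_k(M) = diag(h_k(μ₁),…,h_k(μ_n)). -/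
open Matrix BigOperators

lemma row_mul {a b c : ℕ} (X : Matrix (Fin a) (Fin b) ℂ) (Y : Matrix (Fin b) (Fin c) ℂ)
    (i : Fin a) : (X * Y) i = X i ᵥ* Y := by
  ext j
  simp [Matrix.mul_apply, Matrix.vecMul, dotProduct]

lemma key_row {n K : ℕ} (h : Fin K → ℂ → ℂ) (μ : Fin n → ℂ)
    (A : Fin K → Matrix (Fin n) (Fin n) ℂ) (Y : Matrix (Fin n) (Fin n) ℂ) (i : Fin n) :
    (∑ k, Matrix.diagonal (fun i => h k (μ i)) * Y * A k) i
      = Y i ᵥ* (∑ k, h k (μ i) • A k) := by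
  ext j
  simp only [Matrix.sum_apply, Matrix.mul_apply, Matrix.vecMul, dotProduct,
    Matrix.diagonal_apply, Matrix.smul_apply, smul_eq_mul, Finset.sum_mul, Finset.mul_sum]
  rw [Finset.sum_comm]
  apply Finset.sum_congr rfl
  intro l _
  apply Finset.sum_congr rfl
  intro k _
  rw [Finset.sum_eq_single i]
  · simp; ring
  · intro b _ hb; simp [Ne.symm hb]
  · simp

/-- Characterization of the left interpolation conditions for a structured realization. -/
theorem stmt5 {n m p K : ℕ} (h : Fin K → ℂ → ℂ)
    (A : Fin K → Matrix (Fin n) (Fin n) ℂ)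
    (B : Matrix (Fin n) (Fin m) ℂ) (C : Matrix (Fin p) (Fin n) ℂ)
    (μ : Fin n → ℂ)
    (L : Matrix (Fin p) (Fin n) ℂ) (F : Matrix (Fin m) (Fin n) ℂ)
    (hinv : ∀ i, IsUnit (∑ k, h k (μ i) • A k).det) :
    (∀ i, (Lᵀ i) ᵥ* (C * (∑ k, h k (μ i) • A k)⁻¹ * B) = Fᵀ i) ↔
      (∃ PF : Matrix (Fin n) (Fin n) ℂ, Fᵀ = PFᵀ * B ∧
        ∑ k, Matrix.diagonal (fun i => h k (μ i)) * PFᵀ * A k = Lᵀ * C) := by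
  constructor
  · intro hip
    refine ⟨(Matrix.of fun i => (Lᵀ i) ᵥ* (C * (∑ k, h k (μ i) • A k)⁻¹))ᵀ, ?_, ?_⟩
    · rw [Matrix.transpose_transpose]
      funext i
      rw [row_mul]
      have : ((Matrix.of fun i => (Lᵀ i) ᵥ* (C * (∑ k, h k (μ i) • A k)⁻¹)) i)
          = (Lᵀ i) ᵥ* (C * (∑ k, h k (μ i) • A k)⁻¹) := rfl
      rw [this, Matrix.vecMul_vecMul, ← hip i]
    · rw [Matrix.transpose_transpose]
      funext i
      rw [key_row]
      have : ((Matrix.of fun i => (Lᵀ i) ᵥ* (C * (∑ k, h k (μ i) • A k)⁻¹)) i)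
          = (Lᵀ i) ᵥ* (C * (∑ k, h k (μ i) • A k)⁻¹) := rfl
      rw [this, Matrix.vecMul_vecMul, Matrix.mul_assoc,
        Matrix.nonsing_inv_mul _ (hinv i), Matrix.mul_one, row_mul]
  · rintro ⟨PF, hB, hAC⟩ i
    have hrow : PFᵀ i ᵥ* (∑ k, h k (μ i) • A k) = (Lᵀ i) ᵥ* C := by
      rw [← key_row h μ A PFᵀ i, hAC, row_mul]
    have h2 : (Lᵀ i) ᵥ* (C * (∑ k, h k (μ i) • A k)⁻¹) = PFᵀ i := by
      rw [← Matrix.vecMul_vecMul, ← hrow, Matrix.vecMul_vecMul,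
        Matrix.mul_nonsing_inv _ (hinv i), Matrix.vecMul_one]
    rw [← Matrix.vecMul_vecMul, h2, ← row_mul, ← hB]
end

section
/- Let h₁,…,h_K : ℂ → ℂ, Ã_k ∈ ℂ^{n×n}, B̃ ∈ ℂ^{n×m}, C̃ ∈ ℂ^{p×n}, K̃(s) = Σ_k h_k(s) Ã_k, H̃(s) = C̃ K̃(s)⁻¹ B̃. Let σ₁,…,σ_n ∈ ℂ with K̃(σᵢ) invertible for all i, R = [r₁ … r_n] ∈ ℂ^{m×n}, G = [g₁ … g_n] ∈ ℂ^{p×n}, S = diag(σ₁,…,σ_n). Then H̃(σᵢ) rᵢ = gᵢ for all i if and only if there exists P_G ∈ ℂ^{n×n} with G = C̃ P_G and Σ_k Ã_k P_G h_k(S) = B̃ R. -/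
open Matrix BigOperators

/-- Column-wise formula for the structured sum. -/
lemma colsum_aux {n K : ℕ} (h : Fin K → ℂ → ℂ)
    (A : Fin K → Matrix (Fin n) (Fin n) ℂ) (PG : Matrix (Fin n) (Fin n) ℂ)
    (σ : Fin n → ℂ) (i j : Fin n) :
    (∑ k, A k * PG * Matrix.diagonal (fun i => h k (σ i))) i j =
      ((∑ k, h k (σ j) • A k) *ᵥ (fun l => PG l j)) i := by
  simp only [Matrix.sum_apply, Matrix.mul_diagonal]
  simp only [Matrix.mul_apply, Matrix.mulVec, dotProduct, Finset.sum_apply,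
    Matrix.smul_apply, smul_eq_mul, Finset.sum_mul]
  rw [Finset.sum_comm]
  refine Finset.sum_congr rfl fun l _ => ?_
  rw [Matrix.sum_apply, Finset.sum_mul]
  refine Finset.sum_congr rfl fun k _ => ?_
  simp only [Matrix.smul_apply, smul_eq_mul]
  ring

/-- Characterization of the right interpolation conditions for a structured realization. -/
theorem stmt6 {n m p K : ℕ} (h : Fin K → ℂ → ℂ)
    (A : Fin K → Matrix (Fin n) (Fin n) ℂ)
    (B : Matrix (Fin n) (Fin m) ℂ) (C : Matrix (Fin p) (Fin n) ℂ)
    (σ : Fin n → ℂ)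
    (R : Matrix (Fin m) (Fin n) ℂ) (G : Matrix (Fin p) (Fin n) ℂ)
    (hinv : ∀ i, IsUnit (∑ k, h k (σ i) • A k).det) :
    (∀ i, (C * (∑ k, h k (σ i) • A k)⁻¹ * B) *ᵥ (Rᵀ i) = Gᵀ i) ↔
      (∃ PG : Matrix (Fin n) (Fin n) ℂ, G = C * PG ∧
        ∑ k, A k * PG * Matrix.diagonal (fun i => h k (σ i)) = B * R) := by
  constructor
  · intro hint
    refine ⟨Matrix.of fun i j => (((∑ k, h k (σ j) • A k)⁻¹ * B) *ᵥ (Rᵀ j)) i, ?_, ?_⟩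
    · ext i j
      have h1 := congrFun (hint j) i
      have h2 : (C *ᵥ (((∑ k, h k (σ j) • A k)⁻¹ * B) *ᵥ (Rᵀ j))) i = G i j := by
        rw [Matrix.mulVec_mulVec, ← Matrix.mul_assoc]; exact h1
      rw [Matrix.mul_apply]
      simpa [Matrix.mulVec, dotProduct] using h2.symm
    · ext i j
      rw [colsum_aux]
      simp only [Matrix.of_apply]
      have : (∑ k, h k (σ j) • A k) *ᵥ
          (fun l => (((∑ k, h k (σ j) • A k)⁻¹ * B) *ᵥ (Rᵀ j)) l) =
          B *ᵥ (Rᵀ j) := by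
        have hv : (fun l => (((∑ k, h k (σ j) • A k)⁻¹ * B) *ᵥ (Rᵀ j)) l) =
            ((∑ k, h k (σ j) • A k)⁻¹ * B) *ᵥ (Rᵀ j) := rfl
        rw [hv, Matrix.mulVec_mulVec, ← Matrix.mul_assoc,
          Matrix.mul_nonsing_inv _ (hinv j), Matrix.one_mul]
      rw [this]
      simp [Matrix.mul_apply, Matrix.mulVec, dotProduct]
  · rintro ⟨PG, hG, hsum⟩ j
    have hcol : (∑ k, h k (σ j) • A k) *ᵥ (fun l => PG l j) = B *ᵥ (Rᵀ j) := by
      ext i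
      rw [← colsum_aux h A PG σ i j, hsum]
      simp [Matrix.mul_apply, Matrix.mulVec, dotProduct]
    have hcol2 : (fun l => PG l j) = (∑ k, h k (σ j) • A k)⁻¹ *ᵥ (B *ᵥ (Rᵀ j)) := by
      rw [← hcol, Matrix.mulVec_mulVec, Matrix.nonsing_inv_mul _ (hinv j), Matrix.one_mulVec]
    ext i
    rw [Matrix.mul_assoc, ← Matrix.mulVec_mulVec, ← Matrix.mulVec_mulVec, ← hcol2, hG]
    simp [Matrix.mulVec, dotProduct, Matrix.mul_apply, Matrix.transpose_apply]
end

section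
/- Suppose P_F and P_G are invertible n×n matrices satisfying G = C̃ P_G and Fᵀ = P_Fᵀ B̃, together with K̃(σᵢ) P_G eᵢ = B̃ rᵢ and K̃(μᵢ)ᵀ P_F eᵢ = C̃ᵀ ℓᵢ. Then for every s at which K̃(s) is invertible, C̃ K̃(s)⁻¹ B̃ = G (P_Fᵀ K̃(s) P_G)⁻¹ Fᵀ. -/
open Matrix BigOperators

/-- Uniqueness of the realization up to the state-space transformation `P_F`, `P_G`. -/
theorem stmt7 {n m p : ℕ} (K : ℂ → Matrix (Fin n) (Fin n) ℂ)
    (B : Matrix (Fin n) (Fin m) ℂ) (C : Matrix (Fin p) (Fin n) ℂ)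
    (PF PG : Matrix (Fin n) (Fin n) ℂ)
    (G : Matrix (Fin p) (Fin n) ℂ) (F : Matrix (Fin m) (Fin n) ℂ)
    (μ σ : Fin n → ℂ) (r : Fin n → Fin m → ℂ) (l : Fin n → Fin p → ℂ)
    (hPF : IsUnit PF.det) (hPG : IsUnit PG.det)
    (hG : G = C * PG) (hF : Fᵀ = PFᵀ * B)
    (hcolG : ∀ i, (K (σ i)) *ᵥ (PGᵀ i) = B *ᵥ (r i))
    (hcolF : ∀ i, (K (μ i))ᵀ *ᵥ (PFᵀ i) = Cᵀ *ᵥ (l i)) :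
    ∀ s : ℂ, IsUnit (K s).det →
      C * (K s)⁻¹ * B = G * (PFᵀ * K s * PG)⁻¹ * Fᵀ := by
  intro s hs
  have hPFT : IsUnit PFᵀ.det := by rwa [Matrix.det_transpose]
  rw [hG, hF, Matrix.mul_inv_rev, Matrix.mul_inv_rev]
  rw [show C * PG * (PG⁻¹ * ((K s)⁻¹ * PFᵀ⁻¹)) * (PFᵀ * B)
      = C * (PG * PG⁻¹) * (K s)⁻¹ * (PFᵀ⁻¹ * PFᵀ) * B by simp only [Matrix.mul_assoc]]
  rw [Matrix.mul_nonsing_inv _ hPG, Matrix.nonsing_inv_mul _ hPFT, Matrix.mul_one, Matrix.mul_one]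
end

section
/- For the SISO standard state-space case K̃(s) = s·I_n − Ã with b, c ∈ ℂ^n, and distinct points σ₁,…,σ_n at which K̃ is invertible, the matrix P_G whose i-th column is K̃(σᵢ)⁻¹ b satisfies rank(P_G) = rank([b, Ãb, …, Ã^{n−1} b]). In particular, P_G is invertible if and only if the pair (Ã, b) is controllable. -/
open Matrix BigOperators

open Finset in
private lemma stmt8_reindex {n : ℕ} (c : ℕ → ℂ) (hc : ∀ j, n < j → c j = 0)
    (s : ℂ) (v : ℕ → ℂ) :
    ∑ j ∈ range (n + 1), c j * ∑ m ∈ range j, s ^ m * v (j - 1 - m)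
      = ∑ k ∈ range n, v k * ∑ m ∈ range n, c (k + m + 1) * s ^ m := by
  have h1 : ∀ j, (∑ m ∈ range j, s ^ m * v (j - 1 - m))
      = ∑ k ∈ range j, s ^ (j - 1 - k) * v k := by
    intro j
    rw [← Finset.sum_range_reflect]
    refine Finset.sum_congr rfl fun m hm => ?_
    rw [Finset.mem_range] at hm
    congr 2
    omega
  simp_rw [h1, Finset.mul_sum]
  have h2 := Finset.sum_Ico_Ico_comm' 0 (n + 1)
    (fun k j => c j * (s ^ (j - 1 - k) * v k))
  simp only [← Finset.range_eq_Ico] at h2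
  rw [← h2]
  rw [Finset.sum_range_succ, Finset.Ico_self, Finset.sum_empty, add_zero]
  refine Finset.sum_congr rfl fun k hk => ?_
  rw [Finset.mem_range] at hk
  rw [Finset.sum_Ico_eq_sum_range]
  have hnk : n + 1 - (k + 1) = n - k := by omega
  rw [hnk]
  calc (∑ m ∈ range (n - k), c (k + 1 + m) * (s ^ (k + 1 + m - 1 - k) * v k))
      = ∑ m ∈ range (n - k), v k * (c (k + m + 1) * s ^ m) := by
        refine Finset.sum_congr rfl fun m hm => ?_
        have h3 : k + 1 + m - 1 - k = m := by omega
        have h4 : k + 1 + m = k + m + 1 := by omega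
        rw [h3, h4]; ring
    _ = ∑ m ∈ range n, v k * (c (k + m + 1) * s ^ m) := by
        refine Finset.sum_subset (Finset.range_subset_range.mpr (by omega : n - k ≤ n))
          (fun m hm hm2 => ?_)
        rw [Finset.mem_range] at hm hm2
        have : c (k + m + 1) = 0 := hc _ (by omega)
        rw [this]; ring

private lemma stmt8_eval_charpoly {n : ℕ} (A : Matrix (Fin n) (Fin n) ℂ) (r : ℂ) :
    A.charpoly.eval r = (r • (1 : Matrix (Fin n) (Fin n) ℂ) - A).det := by
  rw [Matrix.charpoly, _root_.eval_det, matPolyEquiv_charmatrix]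
  congr 1
  simp [Matrix.scalar, Matrix.smul_one_eq_diagonal]

private lemma stmt8_sum_mulVec {n : ℕ} {ι : Type*} (s : Finset ι)
    (f : ι → Matrix (Fin n) (Fin n) ℂ) (b : Fin n → ℂ) :
    (∑ j ∈ s, f j) *ᵥ b = ∑ j ∈ s, f j *ᵥ b := by
  ext r
  simp only [Matrix.mulVec, dotProduct, Matrix.sum_apply, Finset.sum_apply,
    Finset.sum_mul]
  rw [Finset.sum_comm]

private lemma stmt8_rank_to_det {n : ℕ} (Kr : Matrix (Fin n) (Fin n) ℂ)
    (h : Kr.rank = n) : IsUnit Kr.det := by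
  rw [isUnit_iff_ne_zero]
  intro hdet
  obtain ⟨v, hv, hKv⟩ := (Matrix.exists_mulVec_eq_zero_iff).mpr hdet
  have hsurj : Function.Surjective Kr.mulVecLin := by
    rw [← LinearMap.range_eq_top]
    apply Submodule.eq_top_of_finrank_eq
    rw [Module.finrank_fintype_fun_eq_card, Fintype.card_fin]
    exact h
  have hinj : Function.Injective Kr.mulVecLin :=
    (LinearMap.injective_iff_surjective).mpr hsurj
  exact hv (by simpa using hinj (a₂ := 0) (by simpa [Matrix.mulVecLin_apply] using hKv))

/-- Nonsingularity of `P_G` is equivalent to controllability in the SISO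
standard state-space case. -/
theorem stmt8 {n : ℕ} (A : Matrix (Fin n) (Fin n) ℂ) (b : Fin n → ℂ)
    (σ : Fin n → ℂ) (hdist : Function.Injective σ)
    (hinv : ∀ i, IsUnit (σ i • (1 : Matrix (Fin n) (Fin n) ℂ) - A).det)
    (PG : Matrix (Fin n) (Fin n) ℂ)
    (hPG : ∀ i, PGᵀ i = (σ i • (1 : Matrix (Fin n) (Fin n) ℂ) - A)⁻¹ *ᵥ b)
    (Kr : Matrix (Fin n) (Fin n) ℂ)
    (hKr : ∀ i, Krᵀ i = (A ^ (i : ℕ)) *ᵥ b) :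
    PG.rank = Kr.rank ∧ (IsUnit PG.det ↔ Kr.rank = n) := by
  classical
  have hdeg : A.charpoly.natDegree = n := by
    rw [Matrix.charpoly_natDegree_eq_dim, Fintype.card_fin]
  set c : ℕ → ℂ := fun j => A.charpoly.coeff j with hc
  have hcoeff0 : ∀ j, n < j → c j = 0 := fun j hj =>
    Polynomial.coeff_eq_zero_of_natDegree_lt (by omega)
  have hmonic : c n = 1 := by
    have h0 := (Matrix.charpoly_monic A).coeff_natDegree
    rwa [hdeg] at h0
  set e : Fin n → ℂ := fun i => A.charpoly.eval (σ i) with he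
  have heval : ∀ i, e i = (σ i • (1 : Matrix (Fin n) (Fin n) ℂ) - A).det :=
    fun i => stmt8_eval_charpoly A (σ i)
  have heunit : ∀ i, e i ≠ 0 := fun i => by
    rw [heval i]; exact (hinv i).ne_zero
  -- Cayley–Hamilton in expanded form
  have hCH : ∑ j ∈ Finset.range (n + 1), c j • A ^ j = 0 := by
    have h0 := A.aeval_self_charpoly
    rwa [Polynomial.aeval_eq_sum_range' (n := n + 1)
      (by rw [hdeg]; exact Nat.lt_succ_self n)] at h0
  -- the polynomial `Q i` with `(σ i • 1 - A) * Q i = e i • 1`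
  set Q : Fin n → Matrix (Fin n) (Fin n) ℂ := fun i =>
    ∑ j ∈ Finset.range (n + 1), c j •
      ∑ m ∈ Finset.range j, (σ i • (1 : Matrix (Fin n) (Fin n) ℂ)) ^ m * A ^ (j - 1 - m)
    with hQdef
  have hcomm : ∀ i, Commute (σ i • (1 : Matrix (Fin n) (Fin n) ℂ)) A :=
    fun i => (Commute.one_left A).smul_left _
  have hQ : ∀ i, (σ i • (1 : Matrix (Fin n) (Fin n) ℂ) - A) * Q i = e i • 1 := by
    intro i
    rw [hQdef, Finset.mul_sum]
    have hterm : ∀ j ∈ Finset.range (n + 1),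
        (σ i • (1 : Matrix (Fin n) (Fin n) ℂ) - A) *
          (c j • ∑ m ∈ Finset.range j,
            (σ i • (1 : Matrix (Fin n) (Fin n) ℂ)) ^ m * A ^ (j - 1 - m))
        = (c j * (σ i) ^ j) • (1 : Matrix (Fin n) (Fin n) ℂ) - c j • A ^ j := by
      intro j hj
      rw [mul_smul_comm, (hcomm i).mul_geom_sum₂, smul_pow, one_pow, smul_sub, smul_smul]
    rw [Finset.sum_congr rfl hterm, Finset.sum_sub_distrib, hCH, sub_zero,
      ← Finset.sum_smul]
    congr 1
    show ∑ j ∈ Finset.range (n + 1), A.charpoly.coeff j * (σ i) ^ j = A.charpoly.eval (σ i)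
    rw [Polynomial.eval_eq_sum_range, hdeg]
  have hresolvent : ∀ i, (σ i • (1 : Matrix (Fin n) (Fin n) ℂ) - A)⁻¹ = (e i)⁻¹ • Q i := by
    intro i
    apply Matrix.inv_eq_right_inv
    rw [mul_smul_comm, hQ i, smul_smul, inv_mul_cancel₀ (heunit i), one_smul]
  -- the change-of-basis matrix M
  set T : Matrix (Fin n) (Fin n) ℂ := Matrix.of (fun k m : Fin n => c (k + m + 1)) with hT
  set M : Matrix (Fin n) (Fin n) ℂ :=
    T * (Matrix.vandermonde σ)ᵀ * Matrix.diagonal (fun i => (e i)⁻¹) with hM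
  -- T is invertible (anti-triangular with unit anti-diagonal)
  have hTdet : IsUnit T.det := by
    have hdet1 : (T.submatrix id ⇑(Fin.revPerm (n := n))).det = 1 := by
      have hupper : (T.submatrix id ⇑(Fin.revPerm (n := n))).BlockTriangular id := by
        intro p q hpq
        show T p (Fin.revPerm q) = 0
        rw [hT, Matrix.of_apply]
        apply hcoeff0
        have hq : ((Fin.revPerm q : Fin n) : ℕ) = n - (q + 1) := rfl
        have hp : (p : ℕ) < n := p.isLt
        have hq2 : (q : ℕ) < n := q.isLt
        have : (q : ℕ) < (p : ℕ) := hpq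
        omega
      rw [Matrix.det_of_upperTriangular hupper]
      apply Finset.prod_eq_one
      intro p _
      show T p (Fin.revPerm p) = 1
      rw [hT, Matrix.of_apply]
      have hq : ((Fin.revPerm p : Fin n) : ℕ) = n - (p + 1) := rfl
      have hp : (p : ℕ) < n := p.isLt
      have : (p : ℕ) + ((Fin.revPerm p : Fin n) : ℕ) + 1 = n := by omega
      rw [this, hmonic]
    rw [Matrix.det_permute'] at hdet1
    exact IsUnit.of_mul_eq_one _ (by rw [mul_comm] at hdet1; exact hdet1)
  have hMdet : IsUnit M.det := by
    rw [hM, Matrix.det_mul, Matrix.det_mul]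
    refine (hTdet.mul ?_).mul ?_
    · rw [Matrix.det_transpose, Matrix.det_vandermonde, isUnit_iff_ne_zero]
      rw [Finset.prod_ne_zero_iff]
      intro i _
      rw [Finset.prod_ne_zero_iff]
      intro j hj
      exact sub_ne_zero.mpr fun hEq => (Finset.mem_Ioi.mp hj).ne' (hdist hEq)
    · rw [Matrix.det_diagonal, isUnit_iff_ne_zero, Finset.prod_ne_zero_iff]
      exact fun i _ => inv_ne_zero (heunit i)
  -- the key factorization `PG = Kr * M`
  have hPGKr : PG = Kr * M := by
    ext r i
    have hPGi : PG r i = ((σ i • (1 : Matrix (Fin n) (Fin n) ℂ) - A)⁻¹ *ᵥ b) r := by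
      rw [← Matrix.transpose_apply PG i r, hPG i]
    set v : ℕ → ℂ := fun p => (A ^ p *ᵥ b) r with hv
    have hQb : (Q i *ᵥ b) r
        = ∑ j ∈ Finset.range (n + 1), c j * ∑ m ∈ Finset.range j, σ i ^ m * v (j - 1 - m) := by
      rw [hQdef]
      rw [stmt8_sum_mulVec, Finset.sum_apply]
      refine Finset.sum_congr rfl fun j hj => ?_
      rw [Matrix.smul_mulVec, Pi.smul_apply, smul_eq_mul]
      congr 1
      rw [stmt8_sum_mulVec, Finset.sum_apply]
      refine Finset.sum_congr rfl fun m hm => ?_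
      rw [smul_pow, one_pow, smul_mul_assoc, one_mul, Matrix.smul_mulVec,
        Pi.smul_apply, smul_eq_mul]
    have hLHS : PG r i
        = (e i)⁻¹ * ∑ k ∈ Finset.range n, v k *
            ∑ m ∈ Finset.range n, c (k + m + 1) * σ i ^ m := by
      rw [hPGi, hresolvent i, Matrix.smul_mulVec, Pi.smul_apply, smul_eq_mul, hQb,
        stmt8_reindex c hcoeff0 (σ i) v]
    have hRHS : (Kr * M) r i
        = ∑ k ∈ Finset.range n, v k *
            ((∑ m ∈ Finset.range n, c (k + m + 1) * σ i ^ m) * (e i)⁻¹) := by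
      rw [Matrix.mul_apply]
      rw [← Fin.sum_univ_eq_sum_range (fun k => v k *
        ((∑ m ∈ Finset.range n, c (k + m + 1) * σ i ^ m) * (e i)⁻¹)) n]
      refine Finset.sum_congr rfl fun k _ => ?_
      have hKrk : Kr r k = v (k : ℕ) := by
        rw [← Matrix.transpose_apply Kr k r, hKr k]
      have hMki : M k i = (∑ m ∈ Finset.range n, c ((k : ℕ) + m + 1) * σ i ^ m) * (e i)⁻¹ := by
        rw [hM, Matrix.mul_diagonal]
        congr 1
        rw [Matrix.mul_apply]
        rw [← Fin.sum_univ_eq_sum_range (fun m => c ((k : ℕ) + m + 1) * σ i ^ m) n]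
        refine Finset.sum_congr rfl fun m _ => ?_
        rw [hT, Matrix.of_apply, Matrix.transpose_apply, Matrix.vandermonde_apply]
      rw [hKrk, hMki]
    rw [hLHS, hRHS, Finset.mul_sum]
    refine Finset.sum_congr rfl fun k _ => ?_
    ring
  refine ⟨?_, ?_⟩
  · rw [hPGKr]
    exact Matrix.rank_mul_eq_left_of_isUnit_det M Kr hMdet
  · rw [hPGKr, Matrix.det_mul]
    constructor
    · intro h
      have hKrdet : IsUnit Kr.det := isUnit_iff_ne_zero.mpr
        (left_ne_zero_of_mul (isUnit_iff_ne_zero.mp h))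
      have h2 := Matrix.rank_of_isUnit Kr ((Matrix.isUnit_iff_isUnit_det Kr).mpr hKrdet)
      rwa [Fintype.card_fin] at h2
    · intro h
      exact (stmt8_rank_to_det Kr h).mul hMdet
end

section
/- Let h₁, h₂ : ℂ → ℂ with h₂(μᵢ) ≠ 0 and h₂(σⱼ) ≠ 0 and h₂(μᵢ)h₁(σⱼ) ≠ h₁(μᵢ)h₂(σⱼ). The generalized Loewner entry Ã₁_{ij} = (h₂(μᵢ) fᵢᵀrⱼ − ℓᵢᵀgⱼ h₂(σⱼ)) / (h₂(μᵢ)h₁(σⱼ) − h₁(μᵢ)h₂(σⱼ)) equals minus the standard Loewner entry built from the transformed data with points h₁(μᵢ)/h₂(μᵢ) and h₁(σⱼ)/h₂(σⱼ), left direction ℓᵢ/h₂(μᵢ), right direction rⱼ/h₂(σⱼ), and the same values fᵢ, gⱼ; i.e., Ã₁_{ij} = −(fᵢᵀ(rⱼ/h₂(σⱼ)) − (ℓᵢ/h₂(μᵢ))ᵀ gⱼ) / (h₁(μᵢ)/h₂(μᵢ) − h₁(σⱼ)/h₂(σⱼ)). -/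
open Matrix Complex

/-- The generalized Loewner entry equals minus the standard Loewner entry
built from the transformed data. -/
theorem stmt11 {m p : ℕ} (h₁ h₂ : ℂ → ℂ) (μ σ : ℂ)
    (f r : Fin m → ℂ) (l g : Fin p → ℂ)
    (h2μ : h₂ μ ≠ 0) (h2σ : h₂ σ ≠ 0) (hμσ : μ ≠ σ)
    (hden : h₂ μ * h₁ σ ≠ h₁ μ * h₂ σ) :
    (h₂ μ * (f ⬝ᵥ r) - (l ⬝ᵥ g) * h₂ σ) / (h₂ μ * h₁ σ - h₁ μ * h₂ σ) =
      -(((f ⬝ᵥ fun j => r j / h₂ σ) - ((fun j => l j / h₂ μ) ⬝ᵥ g)) /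
        (h₁ μ / h₂ μ - h₁ σ / h₂ σ)) := by
  have e1 : (f ⬝ᵥ fun j => r j / h₂ σ) = (f ⬝ᵥ r) / h₂ σ := by
    simp [dotProduct, Finset.sum_div, div_eq_mul_inv, Finset.sum_mul, mul_assoc]
  have e2 : ((fun j => l j / h₂ μ) ⬝ᵥ g) = (l ⬝ᵥ g) / h₂ μ := by
    simp [dotProduct, Finset.sum_div, div_eq_mul_inv, Finset.sum_mul, Finset.mul_sum, mul_comm, mul_assoc, mul_left_comm]
  have hd : h₂ μ * h₁ σ - h₁ μ * h₂ σ ≠ 0 := sub_ne_zero.mpr hden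
  have hd2 : h₁ μ / h₂ μ - h₁ σ / h₂ σ ≠ 0 := by
    rw [div_sub_div _ _ h2μ h2σ, div_ne_zero_iff]
    constructor
    · intro h; apply hden; linear_combination -h
    · exact mul_ne_zero h2μ h2σ
  rw [e1, e2, ← neg_div, div_eq_div_iff hd hd2]
  field_simp
  ring
end

section
/- Let K(s) = Σ_{k=1}^{2} h_k(s) A_k (K = 2 case) with projection matrices W, V as above satisfying Σ_k h_k(M) Wᵀ A_k = Lᵀ C and Σ_k A_k V h_k(S) = B R. Suppose Ã₁ ∈ ℂ^{n×n} satisfies the Sylvester-like equation h₂(M) Ã₁ h₁(S) − h₁(M) Ã₁ h₂(S) = h₂(M) Wᵀ B R − Lᵀ C V h₂(S), and suppose the sets {μᵢ} and {σⱼ} are such that h₂(μᵢ)h₁(σⱼ) − h₁(μᵢ)h₂(σⱼ) ≠ 0 for all i, j. Then Ã₁ = Wᵀ A₁ V. -/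
open Matrix BigOperators

/-- For `K = 2` the data-driven structured realization coincides with the
projection-based reduced model. -/
theorem stmt17 {N n m p : ℕ} (h₁ h₂ : ℂ → ℂ)
    (A₁ A₂ : Matrix (Fin N) (Fin N) ℂ)
    (B : Matrix (Fin N) (Fin m) ℂ) (C : Matrix (Fin p) (Fin N) ℂ)
    (μ σ : Fin n → ℂ)
    (L : Matrix (Fin p) (Fin n) ℂ) (R : Matrix (Fin m) (Fin n) ℂ)
    (W V : Matrix (Fin N) (Fin n) ℂ)
    (hWproj : Matrix.diagonal (fun i => h₁ (μ i)) * Wᵀ * A₁ +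
        Matrix.diagonal (fun i => h₂ (μ i)) * Wᵀ * A₂ = Lᵀ * C)
    (hVproj : A₁ * V * Matrix.diagonal (fun i => h₁ (σ i)) +
        A₂ * V * Matrix.diagonal (fun i => h₂ (σ i)) = B * R)
    (At1 : Matrix (Fin n) (Fin n) ℂ)
    (hSylv : Matrix.diagonal (fun i => h₂ (μ i)) * At1 * Matrix.diagonal (fun i => h₁ (σ i)) -
        Matrix.diagonal (fun i => h₁ (μ i)) * At1 * Matrix.diagonal (fun i => h₂ (σ i)) =
      Matrix.diagonal (fun i => h₂ (μ i)) * (Wᵀ * B) * R -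
        Lᵀ * (C * V) * Matrix.diagonal (fun i => h₂ (σ i)))
    (hden : ∀ i j, h₂ (μ i) * h₁ (σ j) - h₁ (μ i) * h₂ (σ j) ≠ 0) :
    At1 = Wᵀ * A₁ * V := by
  set Dμ1 := Matrix.diagonal (fun i => h₁ (μ i)) with hDμ1
  set Dμ2 := Matrix.diagonal (fun i => h₂ (μ i)) with hDμ2
  set Dσ1 := Matrix.diagonal (fun i => h₁ (σ i)) with hDσ1
  set Dσ2 := Matrix.diagonal (fun i => h₂ (σ i)) with hDσ2
  set X := Wᵀ * A₁ * V with hX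
  have h1 : A₁ * V * Dσ1 = B * R - A₂ * V * Dσ2 := eq_sub_of_add_eq hVproj
  have h2 : Dμ1 * Wᵀ * A₁ = Lᵀ * C - Dμ2 * Wᵀ * A₂ := eq_sub_of_add_eq hWproj
  have e1 : Dμ2 * X * Dσ1 =
      Dμ2 * (Wᵀ * B) * R - Dμ2 * Wᵀ * (A₂ * V * Dσ2) := by
    have : Dμ2 * X * Dσ1 = Dμ2 * Wᵀ * (A₁ * V * Dσ1) := by
      simp only [hX, Matrix.mul_assoc]
    rw [this, h1, Matrix.mul_sub]
    simp only [Matrix.mul_assoc]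
  have e2 : Dμ1 * X * Dσ2 =
      Lᵀ * (C * V) * Dσ2 - Dμ2 * Wᵀ * (A₂ * V * Dσ2) := by
    have : Dμ1 * X * Dσ2 = (Dμ1 * Wᵀ * A₁) * (V * Dσ2) := by
      simp only [hX, Matrix.mul_assoc]
    rw [this, h2, Matrix.sub_mul]
    simp only [Matrix.mul_assoc]
  have key : Dμ2 * X * Dσ1 - Dμ1 * X * Dσ2 =
      Dμ2 * (Wᵀ * B) * R - Lᵀ * (C * V) * Dσ2 := by
    rw [e1, e2]; abel
  have hzero : Dμ2 * (At1 - X) * Dσ1 - Dμ1 * (At1 - X) * Dσ2 = 0 := by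
    simp only [Matrix.mul_sub, Matrix.sub_mul]
    rw [sub_eq_zero]
    have := hSylv.trans key.symm
    linear_combination (norm := abel) this
  have hY : At1 - X = 0 := by
    simp only [hDμ1, hDμ2, hDσ1, hDσ2] at hzero
    ext i j
    have e := congrFun (congrFun hzero i) j
    simp only [Matrix.sub_apply, Matrix.zero_apply, Matrix.mul_diagonal,
      Matrix.diagonal_mul] at e
    have h'' : (h₂ (μ i) * h₁ (σ j) - h₁ (μ i) * h₂ (σ j)) * (At1 - X) i j = 0 := by
      simp only [Matrix.sub_apply]
      linear_combination e
    rcases mul_eq_zero.mp h'' with h | h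
    · exact absurd h (hden i j)
    · simpa using h
  exact sub_eq_zero.mp hY
end
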